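/- Let R > 0 and n ≥ 2. There do not exist masses m_1, …, m_n > 0 and pairwise distinct points c_1, …, c_n ∈ ℂ with Im c_k > 0 for all k that satisfy the parabolic relative-equilibrium equations. In other words, in the curved n-body problem with negative curvature there are no parabolic relative equilibria. -/

import Mathlib

open Complex ComplexConjugate Finset

/-- The quantity `Θ_{3,(k,j)}` appearing in the denominators of the equations of
motion of the curved `n`-body problem in the Poincaré upper half plane. -/
noncomputable def halfTheta (z w : ℂ) : ℝ :=
  (((conj z + z) * (conj w + w)
      - 2 * ((((‖z‖) ^ 2 + (‖w‖) ^ 2 : ℝ)) : ℂ)) ^ 2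
    - (conj z - z) ^ 2 * (conj w - w) ^ 2).re

/-- The points `c k` satisfy the parabolic relative-equilibrium equations in the
Poincaré upper half plane with parameter `R` and masses `m`. -/
def ParabolicRelEq (R : ℝ) {n : ℕ} (m : Fin n → ℝ) (c : Fin n → ℂ) : Prop :=
  ∀ k : Fin n,
    -(R : ℂ) / (4 * (c k - conj (c k)) ^ 4)
      = ∑ j ∈ Finset.univ.erase k,
          (m j : ℂ) * (conj (c j) - c j) ^ 2 * (c k - c j) * (conj (c j) - c k)
            / (((halfTheta (c k) (c j)) ^ ((3 : ℝ) / 2) : ℝ) : ℂ)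

lemma halfTheta_eq (z w : ℂ) : halfTheta z w =
    4 * ((((z.re - w.re)^2 + (z.im - w.im)^2) * ((z.re - w.re)^2 + (z.im + w.im)^2))) := by
  simp only [halfTheta, Complex.sq_norm, Complex.normSq_apply]
  simp only [Complex.sub_re, Complex.mul_re, Complex.mul_im, Complex.add_re, Complex.add_im,
    Complex.conj_re, Complex.conj_im, Complex.ofReal_re, Complex.ofReal_im, Complex.sub_im,
    Complex.re_ofNat, Complex.im_ofNat, pow_two]
  ring

lemma halfTheta_symm (z w : ℂ) : halfTheta z w = halfTheta w z := by
  rw [halfTheta_eq, halfTheta_eq]; ring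

lemma halfTheta_pos {z w : ℂ} (hz : 0 < z.im) (hw : 0 < w.im) (hne : z ≠ w) :
    0 < halfTheta z w := by
  rw [halfTheta_eq]
  have h1 : 0 < (z.re - w.re)^2 + (z.im - w.im)^2 := by
    have : z.re ≠ w.re ∨ z.im ≠ w.im := by
      by_contra hc
      push_neg at hc
      exact hne (Complex.ext hc.1 hc.2)
    rcases this with h | h
    · have := sub_ne_zero_of_ne h; positivity
    · have := sub_ne_zero_of_ne h; positivity
  have h2 : 0 < (z.re - w.re)^2 + (z.im + w.im)^2 := by
    have : z.im + w.im ≠ 0 := by positivity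
    positivity
  positivity

lemma conj_sub_sq (z : ℂ) : (conj z - z) ^ 2 = ((-4 * z.im ^ 2 : ℝ) : ℂ) := by
  have h : conj z - z = -(↑(2 * z.im) * I) := by
    rw [← Complex.sub_conj]; ring
  rw [h]
  push_cast
  rw [neg_pow, mul_pow, mul_pow, Complex.I_sq]
  ring

lemma lhs_eq {R : ℝ} {z : ℂ} (hz : 0 < z.im) :
    -(R : ℂ) / (4 * (z - conj z) ^ 4) = ((-R / (64 * z.im ^ 4) : ℝ) : ℂ) := by
  rw [Complex.sub_conj]
  have him : (z.im : ℂ) ≠ 0 := by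
    simp only [ne_eq, Complex.ofReal_eq_zero]; exact ne_of_gt hz
  have h4 : (↑(2 * z.im) * I) ^ 4 = 16 * (z.im : ℂ) ^ 4 := by
    push_cast
    rw [mul_pow, mul_pow]
    norm_num [Complex.I_pow_four]
  rw [h4]
  have hd1 : (4:ℂ) * (16 * (z.im:ℂ) ^ 4) ≠ 0 := by
    apply mul_ne_zero (by norm_num)
    exact mul_ne_zero (by norm_num) (pow_ne_zero _ him)
  have hd2 : ((64 * z.im ^ 4 : ℝ) : ℂ) ≠ 0 := by
    push_cast
    exact mul_ne_zero (by norm_num) (pow_ne_zero _ him)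
  rw [Complex.ofReal_div, div_eq_div_iff hd1 (by push_cast at hd2 ⊢; exact hd2)]
  push_cast
  ring

lemma re_pair_sum (a b : ℂ) :
    ((a - b) * (conj b - a)).re + ((b - a) * (conj a - b)).re
      = -2 * (a.re - b.re) ^ 2 := by
  simp only [Complex.mul_re, Complex.sub_re, Complex.sub_im, Complex.conj_re, Complex.conj_im]
  ring

/-- In the curved `n`-body problem with negative curvature there are no parabolic
relative equilibria. -/
theorem no_parabolic_relative_equilibria (R : ℝ) (hR : 0 < R) (n : ℕ) (hn : 2 ≤ n) :
    ¬ ∃ (m : Fin n → ℝ) (c : Fin n → ℂ),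
        (∀ k, 0 < m k) ∧ (∀ k, 0 < (c k).im) ∧
        (∀ k j, k ≠ j → c k ≠ c j) ∧ ParabolicRelEq R m c := by

  rintro ⟨m, c, hm, him, hdist, heq⟩
  have : NeZero n := ⟨by omega⟩
  have hθpos : ∀ k j : Fin n, k ≠ j → 0 < (halfTheta (c k) (c j)) ^ ((3:ℝ)/2) :=
    fun k j hkj => Real.rpow_pos_of_pos (halfTheta_pos (him k) (him j) (hdist k j hkj)) _
  set g : Fin n → Fin n → ℝ := fun k j =>
    m k * (c k).im ^ 2 * (m j * (-4 * (c j).im ^ 2)) * ((c k - c j) * (conj (c j) - c k)).re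
      / ((halfTheta (c k) (c j)) ^ ((3:ℝ)/2)) with hg
  have key : ∀ k, m k * (c k).im ^ 2 * (-R / (64 * (c k).im ^ 4))
      = ∑ j ∈ Finset.univ.erase k, g k j := by
    intro k
    have h := heq k
    rw [lhs_eq (him k)] at h
    have h2 := congrArg (fun z : ℂ => ((m k * (c k).im ^ 2 : ℝ) : ℂ) * z) h
    simp only [Finset.mul_sum] at h2
    have hterm : ∀ j ∈ Finset.univ.erase k,
        ((m k * (c k).im ^ 2 : ℝ) : ℂ) *
          ((m j : ℂ) * (conj (c j) - c j) ^ 2 * (c k - c j) * (conj (c j) - c k)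
            / (((halfTheta (c k) (c j)) ^ ((3:ℝ)/2) : ℝ) : ℂ))
        = ((m k * (c k).im ^ 2 * (m j * (-4 * (c j).im ^ 2))
              / ((halfTheta (c k) (c j)) ^ ((3:ℝ)/2)) : ℝ) : ℂ)
            * ((c k - c j) * (conj (c j) - c k)) := by
      intro j hj
      have hkj : k ≠ j := (Finset.mem_erase.mp hj).1.symm
      rw [conj_sub_sq]
      have hθne : (((halfTheta (c k) (c j)) ^ ((3:ℝ)/2) : ℝ) : ℂ) ≠ 0 := by
        exact_mod_cast ne_of_gt (hθpos k j hkj)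
      push_cast
      field_simp
      try ring
      try tauto
    rw [Finset.sum_congr rfl hterm] at h2
    have h3 := congrArg Complex.re h2
    simp only [Complex.re_sum, Complex.re_ofReal_mul, ← Complex.ofReal_mul,
      Complex.ofReal_re] at h3
    rw [h3]
    apply Finset.sum_congr rfl
    intro j hj
    simp only [hg]
    ring
  have hlt : (∑ k, m k * (c k).im ^ 2 * (-R / (64 * (c k).im ^ 4))) < 0 := by
    apply Finset.sum_neg _ Finset.univ_nonempty
    intro k _
    have h1 : (0:ℝ) < m k * (c k).im ^ 2 := by
      have := hm k; have := him k; positivity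
    have h2 : -R / (64 * (c k).im ^ 4) < 0 := by
      apply div_neg_of_neg_of_pos (by linarith)
      have := him k; positivity
    exact mul_neg_of_pos_of_neg h1 h2
  have hsum : (∑ k, m k * (c k).im ^ 2 * (-R / (64 * (c k).im ^ 4)))
      = ∑ k, ∑ j ∈ Finset.univ.erase k, g k j :=
    Finset.sum_congr rfl fun k _ => key k
  have hswap : (∑ k, ∑ j ∈ Finset.univ.erase k, g k j)
      = ∑ k, ∑ j ∈ Finset.univ.erase k, g j k := by
    apply Finset.sum_comm'
    intro x y
    simp only [Finset.mem_univ, Finset.mem_erase, true_and, and_true, ne_eq]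
    exact ⟨fun h => h ∘ Eq.symm, fun h => h ∘ Eq.symm⟩
  have h2S : 0 ≤ (∑ k, ∑ j ∈ Finset.univ.erase k, g k j)
      + ∑ k, ∑ j ∈ Finset.univ.erase k, g j k := by
    rw [← Finset.sum_add_distrib]
    apply Finset.sum_nonneg
    intro k _
    rw [← Finset.sum_add_distrib]
    apply Finset.sum_nonneg
    intro j hj
    have hkj : k ≠ j := (Finset.mem_erase.mp hj).1.symm
    have hre := re_pair_sum (c k) (c j)
    have hpair : g k j + g j k
        = (8 * (m k * m j * (c k).im ^ 2 * (c j).im ^ 2) * ((c k).re - (c j).re) ^ 2)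
            / ((halfTheta (c k) (c j)) ^ ((3:ℝ)/2)) := by
      simp only [hg]
      rw [halfTheta_symm (c j) (c k), ← add_div]
      congr 1
      linear_combination (m k * (c k).im ^ 2 * (m j * (-4 * (c j).im ^ 2))) * hre
    rw [hpair]
    apply div_nonneg _ (le_of_lt (hθpos k j hkj))
    have := hm k; have := hm j
    positivity
  rw [hsum] at hlt
  rw [hswap] at h2S
  linarith
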